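/- arXiv:1505.04073 — 2 statements merged into one kernel-verified Lean document; each statement's English description precedes it below -/
import Mathlib

section
/- Let F be a nonempty closed convex subset of a real Hilbert space with 0 ∈ F, y a point, 0 < λ < λ_0, θ₀ = P_F(y/λ_0), θ* = P_F(y/λ). Let n be any nonzero vector with P_F(θ₀ + t·n) = θ₀ for all t ≥ 0, set r = y/λ − θ₀ and r⊥ = r − (⟨n, r⟩/‖n‖²)·n, and assume ⟨r, n⟩ ≥ 0. Then ‖θ* − (θ₀ + ½ r⊥)‖ ≤ ½ ‖r⊥‖. -/
open RealInnerProductSpace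

lemma varineq_aux {H : Type*} [NormedAddCommGroup H] [InnerProductSpace ℝ H]
    {F : Set H} (hconv : Convex ℝ F) {u v : H} (hv : v ∈ F)
    (h : ∀ x ∈ F, ‖u - v‖ ≤ ‖u - x‖) : ∀ w ∈ F, ⟪u - v, w - v⟫ ≤ 0 := by
  haveI : Nonempty F := ⟨⟨v, hv⟩⟩
  have heq : ‖u - v‖ = ⨅ w : F, ‖u - w‖ := by
    refine le_antisymm (le_ciInf fun w => h w w.2) (ciInf_le ⟨0, ?_⟩ (⟨v, hv⟩ : F))
    rintro x ⟨w, rfl⟩; exact norm_nonneg _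
  exact (norm_eq_iInf_iff_real_inner_le_zero hconv hv).mp heq

/-- Part 4 of the dual-estimation theorem: the dual optimum `θ* = P_F(y/λ)` lies in
the ball of center `θ₀ + r⊥/2` and radius `‖r⊥‖/2`, where `θ₀ = P_F(y/λ₀)`, `n` is a
nonzero vector in the normal cone to `F` at `θ₀` (in the sense that
`P_F(θ₀ + t n) = θ₀` for all `t ≥ 0`), `r = y/λ - θ₀`,
`r⊥ = r - (⟪n, r⟫ / ‖n‖²) n`, and `⟪r, n⟫ ≥ 0`. -/
theorem dual_optimum_in_ball {H : Type*} [NormedAddCommGroup H]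
    [InnerProductSpace ℝ H] [CompleteSpace H]
    (F : Set H) (hne : F.Nonempty) (hF : IsClosed F) (hconv : Convex ℝ F)
    (h0 : (0 : H) ∈ F) (y : H) (lam lam₀ : ℝ) (hlam : 0 < lam) (hlt : lam < lam₀)
    (θ₀ θstar n : H) (hθ₀F : θ₀ ∈ F) (hθstarF : θstar ∈ F)
    (hn : n ≠ 0)
    (hncone : ∀ t : ℝ, 0 ≤ t →
      ∀ x ∈ F, ‖(θ₀ + t • n) - θ₀‖ ≤ ‖(θ₀ + t • n) - x‖)
    (hprojstar : ∀ x ∈ F, ‖lam⁻¹ • y - θstar‖ ≤ ‖lam⁻¹ • y - x‖)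
    (r rperp : H)
    (hr : r = lam⁻¹ • y - θ₀)
    (hrperp : rperp = r - (⟪n, r⟫ / ‖n‖ ^ 2) • n)
    (hrn : 0 ≤ ⟪r, n⟫) :
    ‖θstar - (θ₀ + (1 / 2 : ℝ) • rperp)‖ ≤ (1 / 2) * ‖rperp‖ := by
  set a : ℝ := ⟪n, r⟫ / ‖n‖ ^ 2 with ha_def
  have ha : 0 ≤ a := by
    apply div_nonneg _ (by positivity)
    rw [real_inner_comm]; exact hrn
  have h1 : ⟪lam⁻¹ • y - θstar, θ₀ - θstar⟫ ≤ 0 :=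
    varineq_aux hconv hθstarF hprojstar θ₀ hθ₀F
  have h2 : ⟪n, θstar - θ₀⟫ ≤ 0 := by
    have := varineq_aux hconv hθ₀F (hncone 1 zero_le_one) θstar hθstarF
    simpa using this
  set u : H := θstar - θ₀ with hu
  have hkey : ⟪u, u - rperp⟫ ≤ 0 := by
    have hdecomp : u - rperp = -(lam⁻¹ • y - θstar) + a • n := by
      rw [hrperp, hr, hu]; abel
    rw [hdecomp, inner_add_right, inner_neg_right, real_inner_smul_right]
    have e1 : ⟪u, lam⁻¹ • y - θstar⟫ = -⟪lam⁻¹ • y - θstar, θ₀ - θstar⟫ := by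
      rw [real_inner_comm, hu, ← inner_neg_right]
      congr 1; abel
    have e2 : ⟪u, n⟫ = ⟪n, θstar - θ₀⟫ := by rw [real_inner_comm, hu]
    rw [e1, e2]
    nlinarith [mul_nonneg ha (neg_nonneg.mpr h2)]
  have hrw : θstar - (θ₀ + (1 / 2 : ℝ) • rperp) = u - (1 / 2 : ℝ) • rperp := by
    rw [hu]; abel
  rw [hrw]
  have hsq : ‖u - (1 / 2 : ℝ) • rperp‖ ^ 2 ≤ ((1 / 2) * ‖rperp‖) ^ 2 := by
    rw [norm_sub_sq_real, real_inner_smul_right, norm_smul]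
    have hip : ⟪u, u - rperp⟫ = ‖u‖ ^ 2 - ⟪u, rperp⟫ := by
      rw [inner_sub_right, real_inner_self_eq_norm_sq]
    simp only [Real.norm_eq_abs]
    rw [abs_of_pos (by norm_num : (0:ℝ) < 1 / 2)]
    nlinarith [hkey, hip]
  calc ‖u - (1 / 2 : ℝ) • rperp‖ = Real.sqrt (‖u - (1 / 2 : ℝ) • rperp‖ ^ 2) :=
        (Real.sqrt_sq (norm_nonneg _)).symm
    _ ≤ Real.sqrt (((1 / 2) * ‖rperp‖) ^ 2) := Real.sqrt_le_sqrt hsq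
    _ = (1 / 2) * ‖rperp‖ := Real.sqrt_sq (by positivity)
end

section
/- Let H ∈ ℝ^{T×T} be symmetric, q ∈ ℝ^T, Δ > 0, and suppose u* ∈ ℝ^T and α* ≥ 0 satisfy: H + α*I is positive semidefinite, (H + α*I)u* = −q, and ‖u*‖ ≤ Δ with ‖u*‖ = Δ if α* > 0. Then u* minimizes ψ(u) = ½ uᵀHu + qᵀu over the ball {u : ‖u‖ ≤ Δ}. -/
open RealInnerProductSpace Matrix

lemma norm_sq_eq_dot {T : ℕ} (u : EuclideanSpace ℝ (Fin T)) :
    ‖u‖ ^ 2 = u ⬝ᵥ u := by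
  rw [← real_inner_self_eq_norm_sq]
  simp only [PiLp.inner_apply, dotProduct, RCLike.inner_apply, conj_trivial, mul_comm]

lemma symm_dot {T : ℕ} {A : Matrix (Fin T) (Fin T) ℝ} (hA : A.IsSymm)
    (x y : Fin T → ℝ) : x ⬝ᵥ A.mulVec y = y ⬝ᵥ A.mulVec x := by
  rw [Matrix.dotProduct_mulVec, ← Matrix.mulVec_transpose, hA.eq,
    dotProduct_comm]

/-- Sufficiency in the trust-region (QP1QC) optimality characterization: if
`H + α* I` is positive semidefinite, `(H + α* I) u* = -q`, `‖u*‖ ≤ Δ`, and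
`‖u*‖ = Δ` whenever `α* > 0` (with `α* ≥ 0`), then `u*` minimizes
`ψ(u) = ½ uᵀ H u + qᵀ u` over the ball `{u : ‖u‖ ≤ Δ}`. -/
theorem trust_region_sufficiency {T : ℕ} (M : Matrix (Fin T) (Fin T) ℝ)
    (hM : M.IsSymm) (q : EuclideanSpace ℝ (Fin T)) (Δ : ℝ) (hΔ : 0 < Δ)
    (ustar : EuclideanSpace ℝ (Fin T)) (αstar : ℝ) (hα : 0 ≤ αstar)
    (hpsd : (M + αstar • (1 : Matrix (Fin T) (Fin T) ℝ)).PosSemidef)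
    (heq : (M + αstar • (1 : Matrix (Fin T) (Fin T) ℝ)).mulVec ustar = -q)
    (hball : ‖ustar‖ ≤ Δ) (hbdry : 0 < αstar → ‖ustar‖ = Δ) :
    ∀ u : EuclideanSpace ℝ (Fin T), ‖u‖ ≤ Δ →
      (1 / 2 : ℝ) * (ustar ⬝ᵥ M.mulVec ustar) + q ⬝ᵥ ustar ≤
        (1 / 2 : ℝ) * (u ⬝ᵥ M.mulVec u) + q ⬝ᵥ u := by
  intro u hu
  set A : Matrix (Fin T) (Fin T) ℝ := M + αstar • (1 : Matrix (Fin T) (Fin T) ℝ) with hAdef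
  have hAsymm : A.IsSymm := hpsd.1
  have hAmul : ∀ v : Fin T → ℝ, A.mulVec v = M.mulVec v + αstar • v := by
    intro v
    simp [hAdef, Matrix.add_mulVec, Matrix.smul_mulVec, Matrix.one_mulVec]
  -- expansion of PSD on u - ustar
  have hpsd' : (0:ℝ) ≤ (u - ustar) ⬝ᵥ A.mulVec (u - ustar) := by
    have := hpsd.dotProduct_mulVec_nonneg (u - ustar)
    simpa using this
  have h1 : u ⬝ᵥ A.mulVec ustar = -(q ⬝ᵥ u) := by
    rw [heq]
    rw [dotProduct_neg, dotProduct_comm]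
  have h2 : ustar ⬝ᵥ A.mulVec u = -(q ⬝ᵥ u) := by
    rw [symm_dot hAsymm, h1]
  have h3 : ustar ⬝ᵥ A.mulVec ustar = -(q ⬝ᵥ ustar) := by
    rw [heq]
    rw [dotProduct_neg, dotProduct_comm]
  have h4 : u ⬝ᵥ A.mulVec u = u ⬝ᵥ M.mulVec u + αstar * (u ⬝ᵥ u) := by
    rw [hAmul]
    simp [dotProduct_add, dotProduct_smul, smul_eq_mul]
  have h5 : ustar ⬝ᵥ A.mulVec ustar
      = ustar ⬝ᵥ M.mulVec ustar + αstar * (ustar ⬝ᵥ ustar) := by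
    rw [hAmul]
    simp [dotProduct_add, dotProduct_smul, smul_eq_mul]
  have hexp : (u - ustar) ⬝ᵥ A.mulVec (u - ustar)
      = u ⬝ᵥ A.mulVec u - u ⬝ᵥ A.mulVec ustar - ustar ⬝ᵥ A.mulVec u
        + ustar ⬝ᵥ A.mulVec ustar := by
    rw [Matrix.mulVec_sub, dotProduct_sub, WithLp.ofLp_sub, sub_dotProduct,
      sub_dotProduct]
    ring
  have hnu : u ⬝ᵥ u = ‖u‖ ^ 2 := (norm_sq_eq_dot u).symm
  have hns : ustar ⬝ᵥ ustar = ‖ustar‖ ^ 2 := (norm_sq_eq_dot ustar).symm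
  have hkey : (0:ℝ) ≤ u ⬝ᵥ M.mulVec u + αstar * ‖u‖^2 + 2 * (q ⬝ᵥ u)
      - q ⬝ᵥ ustar := by
    have := hpsd'
    rw [hexp, h1, h2, h3, h4, hnu] at this
    linarith
  have hb : ustar ⬝ᵥ M.mulVec ustar = -(q ⬝ᵥ ustar) - αstar * ‖ustar‖^2 := by
    have := h5
    rw [h3, hns] at this
    linarith
  have hterm : 0 ≤ αstar * (‖ustar‖^2 - ‖u‖^2) := by
    rcases eq_or_lt_of_le hα with h | h
    · simp [← h]
    · have hΔ' : ‖ustar‖ = Δ := hbdry h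
      have : ‖u‖^2 ≤ Δ^2 := by
        have := norm_nonneg u
        nlinarith
      rw [hΔ']
      nlinarith
  rw [hb]
  nlinarith [hkey, hterm]
end
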